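/- Let s be a primitive string of length n over Σ, π a context adaptive ordering family, x a string with |x| < n, and i ∈ Rng(x). Then the symbol in position |x|+1 of row i of M*(s) is the unique character c ∈ Σ satisfying b_x + Σ_{d <_{π_x} c} ℓ_{xd} ≤ i ≤ b_x + Σ_{d ≤_{π_x} c} ℓ_{xd} − 1, where b_x = min Rng(x), ℓ_{xd} = |Rng(xd)| (taken as 0 when Rng(xd) = ∅), and the sums range over characters d that are π_x-smaller than c (respectively π_x-smaller than or equal to c). -/

import Mathlib

/-- The cyclic rotation of `s` by `r`: `s[r+1..n] s[1..r]`. -/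
def rot {α : Type*} (s : List α) (r : ℕ) : List α := s.drop r ++ s.take r

/-- A string is primitive if its cyclic rotations are pairwise distinct. -/
def IsPrimitive {α : Type*} (s : List α) : Prop :=
  ∀ r₁ r₂ : ℕ, r₁ < s.length → r₂ < s.length → rot s r₁ = rot s r₂ → r₁ = r₂

/-- The context adaptive order induced by a family `π` of linear orders on the
alphabet, one for each string (context): `u ≺ v` iff, `x = u[1..k] = v[1..k]`
being the longest common prefix of `u` and `v`, the symbol `u[k+1]` is
`π x`-smaller than `v[k+1]`. -/
def caLt {α : Type*} (π : List α → LinearOrder α) (u v : List α) : Prop :=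
  ∃ (k : ℕ) (hu : k < u.length) (hv : k < v.length),
    u.take k = v.take k ∧ (π (u.take k)).lt (u.get ⟨k, hu⟩) (v.get ⟨k, hv⟩)

/-- The matrix `M*(s)`: an enumeration of the cyclic rotations of `s`
listed in `≺`-increasing order; the `i`-th row is `row i`. -/
structure SortedRotMatrix {α : Type*} (π : List α → LinearOrder α) (s : List α) where
  row : Fin s.length → List α
  row_is_rot : ∀ i, ∃ r : Fin s.length, row i = rot s (r : ℕ)
  rot_is_row : ∀ r : Fin s.length, ∃ i, row i = rot s (r : ℕ)
  sorted : ∀ i j : Fin s.length, i < j → caLt π (row i) (row j)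

/-- `Rng M x`: the set of row indices of `M*(s)` whose row has `x` as a prefix. -/
def Rng {α : Type*} [DecidableEq α] {π : List α → LinearOrder α} {s : List α}
    (M : SortedRotMatrix π s) (x : List α) : Finset (Fin s.length) :=
  Finset.univ.filter (fun i => x <+: M.row i)

section Aux
variable {α : Type*} {π : List α → LinearOrder α} {s : List α}

lemma rot_length' (s : List α) (r : ℕ) : (rot s r).length = s.length := by
  simp [rot]; omega

lemma row_length' (M : SortedRotMatrix π s) (i : Fin s.length) :
    (M.row i).length = s.length := by
  obtain ⟨r, hr⟩ := M.row_is_rot i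
  rw [hr, rot_length']

lemma getElem_eq_of_take_eq' {u v : List α} {k m : ℕ} (h : u.take k = v.take k)
    (hm : m < k) (hu : m < u.length) (hv : m < v.length) : u[m] = v[m] := by
  have h1 : u[m]? = v[m]? := by
    have := congrArg (fun l => l[m]?) h
    simpa [List.getElem?_take, hm] using this
  simpa [List.getElem?_eq_getElem, hu, hv] using h1

lemma take_eq_of_prefix' {x u : List α} (h : x <+: u) {k : ℕ} (hk : k ≤ x.length) :
    u.take k = x.take k := by
  obtain ⟨t, ht⟩ := h
  rw [← ht, List.take_append_of_le_length hk]

lemma prefix_getElem' {x u : List α} (h : x <+: u) {m : ℕ} (hm : m < x.length)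
    (hu : m < u.length) : u[m] = x[m] := by
  obtain ⟨t, ht⟩ := h
  subst ht
  exact List.getElem_append_left hm

/-- Monotonicity of the next character along rows sharing prefix `x`. -/
lemma nextc_mono' (M : SortedRotMatrix π s) (x : List α)
    {i j : Fin s.length} (hij : i < j) (hxi : x <+: M.row i) (hxj : x <+: M.row j)
    (hi' : x.length < (M.row i).length) (hj' : x.length < (M.row j).length) :
    (π x).le ((M.row i)[x.length]'hi') ((M.row j)[x.length]'hj') := by
  obtain ⟨k, hu, hv, htake, hlt⟩ := M.sorted i j hij
  simp only [List.get_eq_getElem] at hlt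
  rcases lt_trichotomy k x.length with hk | hk | hk
  · exfalso
    have he : (M.row i)[k] = (M.row j)[k] := by
      rw [prefix_getElem' hxi hk hu, prefix_getElem' hxj hk hv]
    rw [he] at hlt
    letI := π ((M.row i).take k)
    exact lt_irrefl _ hlt
  · subst hk
    have hctx : (M.row i).take x.length = x := by
      rw [take_eq_of_prefix' hxi le_rfl, List.take_length]
    rw [hctx] at hlt
    letI := π x
    exact le_of_lt hlt
  · have he : (M.row i)[x.length] = (M.row j)[x.length] :=
      getElem_eq_of_take_eq' htake hk hi' hj'
    rw [he]
    letI := π x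
    exact le_refl _

/-- Contiguity: rows between two rows with prefix `x` also have prefix `x`. -/
lemma prefix_of_between' (M : SortedRotMatrix π s) (x : List α)
    {i j k : Fin s.length} (h1 : i ≤ j) (h2 : j ≤ k) (hxl : x.length ≤ s.length)
    (hxi : x <+: M.row i) (hxk : x <+: M.row k) : x <+: M.row j := by
  rcases eq_or_lt_of_le h1 with rfl | h1
  · exact hxi
  rcases eq_or_lt_of_le h2 with rfl | h2
  · exact hxk
  by_contra hxj
  obtain ⟨k1, hu1, hv1, htake1, hlt1⟩ := M.sorted i j h1
  simp only [List.get_eq_getElem] at hlt1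
  -- k1 < x.length, else x would be a prefix of row j
  have hk1 : k1 < x.length := by
    by_contra hge
    push_neg at hge
    apply hxj
    have : (M.row j).take x.length = x := by
      have h3 : (M.row j).take k1 = (M.row i).take k1 := htake1.symm
      have h4 : (M.row j).take x.length = ((M.row j).take k1).take x.length := by
        rw [List.take_take, min_eq_left hge]
      rw [h4, h3, List.take_take, min_eq_left hge,
        take_eq_of_prefix' hxi le_rfl, List.take_length]
    exact this ▸ List.take_prefix _ _
  have hik : k1 < x.length := hk1
  have hctx1 : (M.row i).take k1 = x.take k1 := take_eq_of_prefix' hxi hk1.le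
  have hxik1 : (M.row i)[k1] = x[k1] := prefix_getElem' hxi hk1 hu1
  rw [hctx1, hxik1] at hlt1
  -- hlt1 : (π (x.take k1)).lt x[k1] (M.row j)[k1]
  obtain ⟨k2, hu2, hv2, htake2, hlt2⟩ := M.sorted j k h2
  simp only [List.get_eq_getElem] at hlt2
  letI := π (x.take k1)
  have hne1 : x[k1] ≠ (M.row j)[k1] := ne_of_lt hlt1
  have hk2 : k2 = k1 := by
    rcases lt_trichotomy k2 k1 with h | h | h
    · exfalso
      have e1 : (M.row j)[k2] = (M.row i)[k2] :=
        (getElem_eq_of_take_eq' htake1 h (h.trans hu1) (h.trans hv1)).symm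
      have e2 : (M.row i)[k2] = x[k2] := prefix_getElem' hxi (h.trans hk1) (h.trans hu1)
      have e3 : (M.row k)[k2] = x[k2] := prefix_getElem' hxk (h.trans hk1) hv2
      rw [e1, e2, ← e3] at hlt2
      letI := π ((M.row j).take k2)
      exact lt_irrefl _ hlt2
    · exact h
    · exfalso
      have hk1v2 : k1 < (M.row k).length := lt_trans h hv2
      have e1 : (M.row j)[k1] = (M.row k)[k1] :=
        getElem_eq_of_take_eq' htake2 h hv1 hk1v2
      have e2 : (M.row k)[k1] = x[k1] := prefix_getElem' hxk hk1 hk1v2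
      exact hne1 (by rw [e1, e2])
  subst hk2
  have hctx2 : (M.row j).take k2 = x.take k2 := by
    rw [← hctx1, htake1]
  have hxkk : (M.row k)[k2] = x[k2] := prefix_getElem' hxk hk1 hv2
  rw [hctx2, hxkk] at hlt2
  exact absurd hlt1 (not_lt_of_gt hlt2)

open scoped Classical

variable [DecidableEq α] [Fintype α]

lemma Rng_append' (M : SortedRotMatrix π s) (x : List α) (hx : x.length < s.length) (d : α) :
    Rng M (x ++ [d]) = (Rng M x).filter
      (fun j => (M.row j)[x.length]'(by rw [row_length']; exact hx) = d) := by
  ext j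
  simp only [Rng, Finset.mem_filter, Finset.mem_univ, true_and]
  constructor
  · intro h
    have hxp : x <+: M.row j := (List.prefix_append x [d]).trans h
    refine ⟨hxp, ?_⟩
    have hlen : x.length < (x ++ [d]).length := by simp
    have := prefix_getElem' h hlen (by rw [row_length']; exact hx)
    rw [this]
    simp
  · rintro ⟨⟨t, ht⟩, hd⟩
    cases t with
    | nil =>
      exfalso
      have h2 := row_length' M j
      rw [← ht] at h2
      simp at h2
      omega
    | cons a t' =>
      have hd' : (M.row j)[x.length]? = some d := by
        rw [List.getElem?_eq_getElem (by rw [row_length']; exact hx)]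
        exact congrArg some hd
      rw [← ht] at hd'
      rw [List.getElem?_append_right le_rfl] at hd'
      simp only [Nat.sub_self, List.getElem?_cons_zero, Option.some.injEq] at hd'
      have ha : a = d := hd'
      refine ⟨t', ?_⟩
      rw [← ht, ha]
      simp

lemma sum_card_Rng' (M : SortedRotMatrix π s) (x : List α) (hx : x.length < s.length)
    (P : α → Prop) [DecidablePred P] :
    ∑ d ∈ Finset.univ.filter P, (Rng M (x ++ [d])).card
      = ((Rng M x).filter
          (fun j => P ((M.row j)[x.length]'(by rw [row_length']; exact hx)))).card := by
  set c : Fin s.length → α := fun j => (M.row j)[x.length]'(by rw [row_length']; exact hx)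
    with hc
  have h1 : ((Rng M x).filter (fun j => P (c j))).card
      = ∑ d ∈ Finset.univ.filter P,
          (((Rng M x).filter (fun j => P (c j))).filter (fun j => c j = d)).card :=
    Finset.card_eq_sum_card_fiberwise (fun j hj => by
      simp only [Finset.mem_coe, Finset.mem_filter] at hj ⊢
      exact ⟨Finset.mem_univ _, hj.2⟩)
  rw [h1]
  refine Finset.sum_congr rfl (fun d hd => ?_)
  simp only [Finset.mem_filter, Finset.mem_univ, true_and] at hd
  congr 1
  rw [Rng_append' M x hx d]
  ext j
  simp only [Finset.mem_filter, Finset.filter_filter]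
  constructor
  · rintro ⟨hj, h2⟩
    have h3 : c j = d := h2
    exact ⟨hj, h3 ▸ hd, h3⟩
  · rintro ⟨hj, -, h2⟩
    exact ⟨hj, h2⟩

end Aux

open scoped Classical in
/-- For `i ∈ Rng x`, the symbol in position `|x|+1` of row `i` of `M*(s)` is
the unique `c ∈ Σ` with
`b_x + Σ_{d <_{π_x} c} ℓ_{xd} ≤ i ≤ b_x + Σ_{d ≤_{π_x} c} ℓ_{xd} − 1`
(indices here are 0-based, so row `i` 0-based corresponds to row `i+1`
1-based and `b_x = min (Rng x)` is 0-based as well). -/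
theorem nextChar_unique {α : Type*} [Fintype α] [Nonempty α] [DecidableEq α]
    (π : List α → LinearOrder α) (s : List α) (hprim : IsPrimitive s)
    (M : SortedRotMatrix π s) (x : List α) (hx : x.length < s.length)
    (hne : (Rng M x).Nonempty) (i : Fin s.length) (hi : i ∈ Rng M x) :
    ∀ c : α, (M.row i)[x.length]? = some c ↔
      (((Rng M x).min' hne : ℕ)
          + ∑ d ∈ Finset.univ.filter (fun d => (π x).lt d c), (Rng M (x ++ [d])).card
        ≤ (i : ℕ) ∧
       (i : ℕ) + 1 ≤ ((Rng M x).min' hne : ℕ)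
          + ∑ d ∈ Finset.univ.filter (fun d => (π x).le d c), (Rng M (x ++ [d])).card) := by
  intro c
  have hrow : ∀ j : Fin s.length, x.length < (M.row j).length := fun j => by
    rw [row_length']; exact hx
  set nc : Fin s.length → α := fun j => (M.row j)[x.length]'(hrow j) with hnc
  set b := (Rng M x).min' hne with hb
  have hbmem : b ∈ Rng M x := (Rng M x).min'_mem hne
  have hble : ∀ j ∈ Rng M x, b ≤ j := fun j hj => (Rng M x).min'_le j hj
  have hbi : (b : ℕ) ≤ (i : ℕ) := hble i hi
  have hipre : x <+: M.row i := by simpa [Rng] using hi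
  have hbpre : x <+: M.row b := by simpa [Rng] using hbmem
  have hmono : ∀ j k : Fin s.length, j ≤ k → j ∈ Rng M x → k ∈ Rng M x →
      (π x).le (nc j) (nc k) := by
    intro j k hjk hj hk
    rcases eq_or_lt_of_le hjk with rfl | h
    · letI := π x; exact le_refl _
    · exact nextc_mono' M x h (by simpa [Rng] using hj) (by simpa [Rng] using hk)
        (hrow j) (hrow k)
  have hcont : ∀ j : Fin s.length, b ≤ j → j ≤ i → j ∈ Rng M x := by
    intro j h1 h2
    simp only [Rng, Finset.mem_filter, Finset.mem_univ, true_and]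
    exact prefix_of_between' M x h1 h2 hx.le hbpre hipre
  set c0 := nc i with hc0
  have hsum : ∀ P : α → Prop,
      ∑ d ∈ Finset.univ.filter P, (Rng M (x ++ [d])).card
        = ((Rng M x).filter (fun j => P (nc j))).card := fun P => sum_card_Rng' M x hx P
  have hcard_lt : ((Rng M x).filter (fun j => (π x).lt (nc j) c0)).card ≤ (i : ℕ) - b := by
    have hsub : ((Rng M x).filter (fun j => (π x).lt (nc j) c0)) ⊆ Finset.Ico b i := by
      intro j hj
      simp only [Finset.mem_filter] at hj
      rw [Finset.mem_Ico]
      refine ⟨hble j hj.1, ?_⟩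
      by_contra hij
      push_neg at hij
      have hle := hmono i j hij hi hj.1
      letI := π x
      exact absurd hj.2 (not_lt_of_ge hle)
    calc ((Rng M x).filter (fun j => (π x).lt (nc j) c0)).card
        ≤ (Finset.Ico b i).card := Finset.card_le_card hsub
      _ = (i : ℕ) - b := by rw [Fin.card_Ico]
  have hcard_le : (i : ℕ) - b + 1 ≤
      ((Rng M x).filter (fun j => (π x).le (nc j) c0)).card := by
    have hsub : Finset.Icc b i ⊆ (Rng M x).filter (fun j => (π x).le (nc j) c0) := by
      intro j hj
      rw [Finset.mem_Icc] at hj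
      have hjm := hcont j hj.1 hj.2
      exact Finset.mem_filter.2 ⟨hjm, hmono j i hj.2 hjm hi⟩
    have h2 := Finset.card_le_card hsub
    rw [Fin.card_Icc] at h2
    omega
  have hL : (M.row i)[x.length]? = some c ↔ c0 = c := by
    rw [List.getElem?_eq_getElem (hrow i), Option.some_inj]
  rw [hL]
  constructor
  · rintro rfl
    have e1 : ∑ d ∈ Finset.univ.filter (fun d => (π x).lt d c0), (Rng M (x ++ [d])).card
        = ((Rng M x).filter (fun j => (π x).lt (nc j) c0)).card :=
      sum_card_Rng' M x hx _
    have e2 : ∑ d ∈ Finset.univ.filter (fun d => (π x).le d c0), (Rng M (x ++ [d])).card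
        = ((Rng M x).filter (fun j => (π x).le (nc j) c0)).card :=
      sum_card_Rng' M x hx _
    constructor
    · rw [e1]; omega
    · rw [e2]; omega
  · rintro ⟨hA, hB⟩
    have e1 : ∑ d ∈ Finset.univ.filter (fun d => (π x).lt d c), (Rng M (x ++ [d])).card
        = ((Rng M x).filter (fun j => (π x).lt (nc j) c)).card :=
      sum_card_Rng' M x hx _
    have e2 : ∑ d ∈ Finset.univ.filter (fun d => (π x).le d c), (Rng M (x ++ [d])).card
        = ((Rng M x).filter (fun j => (π x).le (nc j) c)).card :=
      sum_card_Rng' M x hx _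
    rw [e1] at hA
    rw [e2] at hB
    letI := π x
    by_contra hcc
    rcases lt_or_gt_of_ne hcc with hlt | hlt
    · -- c0 < c : the "lt c" filter contains the "le c0" filter
      have hsub : ((Rng M x).filter (fun j => (π x).le (nc j) c0))
          ⊆ ((Rng M x).filter (fun j => (π x).lt (nc j) c)) := by
        intro j hj
        simp only [Finset.mem_filter] at hj ⊢
        exact ⟨hj.1, lt_of_le_of_lt hj.2 hlt⟩
      have h3 := Finset.card_le_card hsub
      omega
    · -- c < c0 : the "le c" filter is inside the "lt c0" filter
      have hsub : ((Rng M x).filter (fun j => (π x).le (nc j) c))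
          ⊆ ((Rng M x).filter (fun j => (π x).lt (nc j) c0)) := by
        intro j hj
        simp only [Finset.mem_filter] at hj ⊢
        exact ⟨hj.1, lt_of_le_of_lt hj.2 hlt⟩
      have h3 := Finset.card_le_card hsub
      omega
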